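/- arXiv:1001.0194 — 5 statements merged into one kernel-verified Lean document; each statement's English description precedes it below -/
import Mathlib

section
/- Let μ be a singular cardinal, let (⟨μ_i : i < cf(μ)⟩, ⟨f_α : α < μ⁺⟩) be a scale for μ, and let A ⊆ μ⁺ be unbounded. Then for all sufficiently large i < cf(μ) (that is, there is i* < cf(μ) such that for all i with i* ≤ i < cf(μ)), the set of ξ < μ_i for which {α ∈ A : f_α(i) = ξ} is unbounded in μ⁺ is itself unbounded in μ_i. -/
noncomputable section

open Set

/-- The successor cardinal of `mu`, as an ordinal. -/
def sucOrd (mu : Cardinal) : Ordinal := (Order.succ mu).ord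

/-- The cofinality of `mu`, as an ordinal. -/
def cofOrd (mu : Cardinal) : Ordinal := (Ordinal.cof mu.ord).ord

/-- `mu` is a singular cardinal: infinite, with cofinality smaller than itself. -/
def IsSingular (mu : Cardinal) : Prop :=
  Cardinal.aleph0 ≤ mu ∧ Ordinal.cof mu.ord < mu

/-- `C` is unbounded below `lam`. -/
def UnbddIn (C : Set Ordinal) (lam : Ordinal) : Prop :=
  ∀ x < lam, ∃ y ∈ C, x ≤ y ∧ y < lam

/-- `C` is closed below `lam`: any accumulation point below `lam` belongs to `C`. -/
def ClosedIn (C : Set Ordinal) (lam : Ordinal) : Prop :=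
  ∀ δ, δ < lam → 0 < δ → (∀ x < δ, ∃ y ∈ C, x < y ∧ y < δ) → δ ∈ C

/-- `C` is a closed unbounded subset of `lam`. -/
def IsClubIn (C : Set Ordinal) (lam : Ordinal) : Prop :=
  C ⊆ Set.Iio lam ∧ ClosedIn C lam ∧ UnbddIn C lam

/-- `S` is a stationary subset of `lam`: it meets every closed unbounded subset of `lam`. -/
def IsStatIn (S : Set Ordinal) (lam : Ordinal) : Prop :=
  S ⊆ Set.Iio lam ∧ ∀ C, IsClubIn C lam → (S ∩ C).Nonempty

/-- The set of ordinals `t` has cardinality `< kappa`. -/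
def CardLT (t : Set Ordinal) (kappa : Cardinal) : Prop :=
  (Cardinal.mk ↥t : Cardinal.{1}) < Cardinal.lift.{1, 0} kappa

/-- `c` witnesses Shelah's principle `pr₁(μ⁺, μ⁺, σ, cf μ)`: for every sequence
`⟨t_α : α < μ⁺⟩` of pairwise disjoint subsets of `μ⁺`, each of size `< cf μ`, and every
color `ε < σ`, there are `α < β < μ⁺` with `c` constantly `ε` on pairs from `t_α × t_β`. -/
def Pr1With (mu sigma : Cardinal) (c : Ordinal → Ordinal → Ordinal) : Prop :=
  (∀ a b, a < b → b < sucOrd mu → c a b < sigma.ord) ∧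
  ∀ t : Ordinal → Set Ordinal,
    (∀ a, a < sucOrd mu → t a ⊆ Set.Iio (sucOrd mu)) →
    (∀ a b, a < sucOrd mu → b < sucOrd mu → a ≠ b → Disjoint (t a) (t b)) →
    (∀ a, a < sucOrd mu → CardLT (t a) (Ordinal.cof mu.ord)) →
    ∀ ε, ε < sigma.ord →
      ∃ α β, α < β ∧ β < sucOrd mu ∧
        ∀ ξ ∈ t α, ∀ ζ ∈ t β, c (min ξ ζ) (max ξ ζ) = ε

/-- Shelah's principle `pr₁(μ⁺, μ⁺, σ, cf μ)`. -/
def Pr1 (mu sigma : Cardinal) : Prop := ∃ c, Pr1With mu sigma c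

/-- `(mus, f)` is a scale for the singular cardinal `mu`. -/
structure IsScale (mu : Cardinal) (mus : Ordinal → Cardinal)
    (f : Ordinal → Ordinal → Ordinal) : Prop where
  regular : ∀ i, i < cofOrd mu → (mus i).IsRegular
  strictMono : ∀ i j, i < j → j < cofOrd mu → mus i < mus j
  le_mu : ∀ i, i < cofOrd mu → mus i ≤ mu
  unbdd : ∀ θ, θ < mu → ∃ i, i < cofOrd mu ∧ θ < mus i
  cof_lt : Ordinal.cof mu.ord < mus 0
  f_lt : ∀ α, α < sucOrd mu → ∀ i, i < cofOrd mu → f α i < (mus i).ord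
  f_mono : ∀ α β, α < β → β < sucOrd mu →
    ∃ i0, i0 < cofOrd mu ∧ ∀ i, i0 ≤ i → i < cofOrd mu → f α i < f β i
  f_cofinal : ∀ g : Ordinal → Ordinal, (∀ i, i < cofOrd mu → g i < (mus i).ord) →
    ∃ α, α < sucOrd mu ∧ ∃ i0, i0 < cofOrd mu ∧ ∀ i, i0 ≤ i → i < cofOrd mu → g i < f α i

/-- The minimal walk from `b` down to `a` along the C-sequence `e`:
`walk e a b 0 = b` and `walk e a b (n+1) = min (e (walk e a b n) \ a)`,
staying at `a` once it is reached. -/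
def walk (e : Ordinal → Set Ordinal) (a b : Ordinal) : ℕ → Ordinal
  | 0 => b
  | n + 1 => if walk e a b n = a then a else sInf (e (walk e a b n) ∩ Set.Ici a)

/-- `ρ₂(a,b)`: the length of the minimal walk from `b` to `a`, i.e. the least `n`
with `walk e a b n = a`. -/
def rho2 (e : Ordinal → Set Ordinal) (a b : Ordinal) : ℕ :=
  sInf {n : ℕ | walk e a b n = a}

/-- `β_i⁻(a,b)`: zero for `i = 0`, and `sup (e_{β_j(a,b)} ∩ a)` for `i = j+1`. -/
def walkLow (e : Ordinal → Set Ordinal) (a b : Ordinal) : ℕ → Ordinal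
  | 0 => 0
  | j + 1 => sSup (e (walk e a b j) ∩ Set.Iio a)

/-- `γ(a,b) = β_{ρ₂(a,b)-1}(a,b)`, the last step before the walk reaches `a`. -/
def gammaW (e : Ordinal → Set Ordinal) (a b : Ordinal) : Ordinal :=
  walk e a b (rho2 e a b - 1)

/-- `γ⁻(a,b) = max {β_i⁻(a,b) : i < ρ₂(a,b)}`. -/
def gammaMinusW (e : Ordinal → Set Ordinal) (a b : Ordinal) : Ordinal :=
  sSup (walkLow e a b '' {i : ℕ | i < rho2 e a b})

/-- `η(a,b) = max {β_i⁻(a,b) : i ≤ ρ₂(a,b)}`. -/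
def etaW (e : Ordinal → Set Ordinal) (a b : Ordinal) : Ordinal :=
  sSup (walkLow e a b '' {i : ℕ | i ≤ rho2 e a b})

/-- `e` is a C-sequence on `lam`: each `e ξ` is closed unbounded in `ξ`. -/
def IsCSeq (e : Ordinal → Set Ordinal) (lam : Ordinal) : Prop :=
  ∀ ξ, ξ < lam → IsClubIn (e ξ) ξ

/-- `ξ` is an accumulation point of `C`: `ξ = sup (C ∩ ξ) > 0`. -/
def IsAccOf (C : Set Ordinal) (ξ : Ordinal) : Prop :=
  0 < ξ ∧ sSup (C ∩ Set.Iio ξ) = ξ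

/-- The non-accumulation points of `C`. -/
def naccOf (C : Set Ordinal) : Set Ordinal :=
  {ξ ∈ C | sSup (C ∩ Set.Iio ξ) < ξ}


/-- For a scale `(mus, f)` on singular `μ` and an unbounded `A ⊆ μ⁺`: for all sufficiently large
`i < cf μ`, the set of `ξ < μ_i` such that `{α ∈ A : f_α(i) = ξ}` is unbounded in `μ⁺` is
unbounded in `μ_i`. -/
theorem stmt5 (mu : Cardinal) (hsing : IsSingular mu)
    (mus : Ordinal → Cardinal) (f : Ordinal → Ordinal → Ordinal)
    (hscale : IsScale mu mus f)
    (A : Set Ordinal) (hA : A ⊆ Set.Iio (sucOrd mu)) (hAu : UnbddIn A (sucOrd mu)) :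
    ∃ istar, istar < cofOrd mu ∧ ∀ i, istar ≤ i → i < cofOrd mu →
      ∀ ξ₀, ξ₀ < (mus i).ord → ∃ ξ, ξ₀ < ξ ∧ ξ < (mus i).ord ∧
        ∀ y, y < sucOrd mu → ∃ α ∈ A, y < α ∧ f α i = ξ := by
  classical
  by_contra hcon
  have hmu0 : Cardinal.aleph0 ≤ mu := hsing.1
  have hreg : (Order.succ mu).IsRegular := Cardinal.isRegular_succ hmu0
  have hcof_lam : (sucOrd mu).cof = Order.succ mu := hreg.cof_eq
  have hlamlim : Order.IsSuccLimit (sucOrd mu) :=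
    Cardinal.isSuccLimit_ord (hmu0.trans (Order.le_succ mu))
  -- bad indices are cofinal
  have hbad : ∀ istar, istar < cofOrd mu → ∃ i, istar ≤ i ∧ i < cofOrd mu ∧
      ∃ ξ₀, ξ₀ < (mus i).ord ∧ ∀ ξ, ξ₀ < ξ → ξ < (mus i).ord →
        ∃ y, y < sucOrd mu ∧ ∀ α ∈ A, y < α → f α i ≠ ξ := by
    intro istar histar
    by_contra hno
    push_neg at hno
    refine hcon ⟨istar, histar, fun i hge hlt ξ₀ hξ₀ => ?_⟩
    obtain ⟨ξ, h1, h2, h3⟩ := hno i hge hlt ξ₀ hξ₀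
    exact ⟨ξ, h1, h2, h3⟩
  -- choose thresholds ζ
  have hzeta : ∀ i : Ordinal, ∃ z : Ordinal,
      (i < cofOrd mu → z < (mus i).ord) ∧
      ((∃ ξ₀, ξ₀ < (mus i).ord ∧ ∀ ξ, ξ₀ < ξ → ξ < (mus i).ord →
          ∃ y, y < sucOrd mu ∧ ∀ α ∈ A, y < α → f α i ≠ ξ) →
        ∀ ξ, z < ξ → ξ < (mus i).ord →
          ∃ y, y < sucOrd mu ∧ ∀ α ∈ A, y < α → f α i ≠ ξ) := by
    intro i
    by_cases h : ∃ ξ₀, ξ₀ < (mus i).ord ∧ ∀ ξ, ξ₀ < ξ → ξ < (mus i).ord →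
        ∃ y, y < sucOrd mu ∧ ∀ α ∈ A, y < α → f α i ≠ ξ
    · obtain ⟨z, hz1, hz2⟩ := h
      exact ⟨z, fun _ => hz1, fun _ => hz2⟩
    · refine ⟨0, fun hi => ?_, fun h' => absurd h' h⟩
      have hpos : (0 : Cardinal) < mus i :=
        Cardinal.aleph0_pos.trans_le (hscale.regular i hi).1
      simpa using Cardinal.ord_lt_ord.2 hpos
  choose ζ hζ1 hζ2 using hzeta
  -- choose fiber bounds b
  have hbchoice : ∀ i ξ : Ordinal, ∃ y : Ordinal, y < sucOrd mu ∧
      ((∃ y', y' < sucOrd mu ∧ ∀ α ∈ A, y' < α → f α i ≠ ξ) →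
        ∀ α ∈ A, y < α → f α i ≠ ξ) := by
    intro i ξ
    by_cases h : ∃ y', y' < sucOrd mu ∧ ∀ α ∈ A, y' < α → f α i ≠ ξ
    · obtain ⟨y, hy1, hy2⟩ := h
      exact ⟨y, hy1, fun _ => hy2⟩
    · exact ⟨0, hlamlim.bot_lt, fun h' => absurd h' h⟩
  choose b hb1 hb2 using hbchoice
  -- the suprema
  set γ : Ordinal → Ordinal :=
    fun i => Ordinal.bsup ((mus i).ord) (fun ξ _ => b i ξ + 1) with hγdef
  have hγlt : ∀ i, i < cofOrd mu → γ i < sucOrd mu := by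
    intro i hi
    apply Ordinal.bsup_lt_ord
    · rw [Cardinal.card_ord, hcof_lam]
      exact ((hscale.le_mu i hi).trans_lt (Order.lt_succ mu))
    · intro ξ hξ
      have := hlamlim.succ_lt (hb1 i ξ)
      simpa [Order.succ] using this
  set γstar : Ordinal := Ordinal.bsup (cofOrd mu) (fun i _ => γ i) with hγsdef
  have hγstar : γstar < sucOrd mu := by
    apply Ordinal.bsup_lt_ord
    · have hc : (cofOrd mu).card = Ordinal.cof mu.ord := Cardinal.card_ord _
      rw [hc, hcof_lam]
      exact (hsing.2.trans (Order.lt_succ mu))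
    · exact fun i hi => hγlt i hi
  -- use cofinality of the scale with g = ζ
  obtain ⟨α₀, hα₀lt, i₀, hi₀, hi₀spec⟩ := hscale.f_cofinal ζ (fun i hi => hζ1 i hi)
  -- pick α ∈ A above α₀ and γstar
  obtain ⟨α, hαA, hαge, hαlt⟩ :=
    hAu (Order.succ (max α₀ γstar)) (hlamlim.succ_lt (max_lt hα₀lt hγstar))
  have hα₀α : α₀ < α := (le_max_left _ _).trans_lt ((Order.lt_succ _).trans_le hαge)
  have hγα : γstar < α := (le_max_right _ _).trans_lt ((Order.lt_succ _).trans_le hαge)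
  obtain ⟨i₁, hi₁, hi₁spec⟩ := hscale.f_mono α₀ α hα₀α hαlt
  -- pick a bad i beyond i₀, i₁
  obtain ⟨i, hige, hilt, hBadi⟩ := hbad (max i₀ i₁) (max_lt hi₀ hi₁)
  have h1 : ζ i < f α₀ i := hi₀spec i ((le_max_left _ _).trans hige) hilt
  have h2 : f α₀ i < f α i := hi₁spec i ((le_max_right _ _).trans hige) hilt
  have h3 : f α i < (mus i).ord := hscale.f_lt α hαlt i hilt
  have hbdd : ∃ y, y < sucOrd mu ∧ ∀ α' ∈ A, y < α' → f α' i ≠ f α i :=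
    hζ2 i hBadi (f α i) (h1.trans h2) h3
  have hbprop : ∀ α' ∈ A, b i (f α i) < α' → f α' i ≠ f α i := hb2 i (f α i) hbdd
  have hbα : b i (f α i) < α := by
    have hle : b i (f α i) + 1 ≤ γ i := Ordinal.le_bsup (fun ξ _ => b i ξ + 1) (f α i) h3
    have hle2 : γ i ≤ γstar := Ordinal.le_bsup (fun j _ => γ j) i hilt
    exact (Order.lt_add_one_iff.mpr le_rfl).trans_le ((hle.trans hle2).trans hγα.le)
  exact hbprop α hαA hbα rfl

end
end

section
/- Let λ be a cardinal and ⟨e_α^m : α < λ, m < ω⟩ a generalized C-sequence on λ. Then for all α < β < λ there is m* < ω such that for every m ≥ m*, the m-walk from β to α coincides with the m*-walk from β to α; that is, ρ₂^m(α, β) = ρ₂^{m*}(α, β) and β_i^m(α, β) = β_i^{m*}(α, β) for all i ≤ ρ₂^{m*}(α, β). -/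
noncomputable section

open Set

section Aux

lemma walk_shift' (e : Ordinal → Set Ordinal) (a b : Ordinal) :
    ∀ n, walk e a b (n + 1) = walk e a (walk e a b 1) n := by
  intro n
  induction n with
  | zero => rfl
  | succ n ih =>
    show (if walk e a b (n + 1) = a then a else sInf (e (walk e a b (n + 1)) ∩ Set.Ici a)) =
      (if walk e a (walk e a b 1) n = a then a
        else sInf (e (walk e a (walk e a b 1) n) ∩ Set.Ici a))
    rw [ih]

lemma walk_term' (lam : Ordinal) (e : Ordinal → Set Ordinal)
    (hclub : ∀ ξ, ξ < lam → IsClubIn (e ξ) ξ) :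
    ∀ b, b < lam → ∀ a, a < b → ∃ n, walk e a b n = a := by
  intro b
  induction b using Ordinal.induction with
  | h b IH =>
    intro hb a hab
    have hne : (e b ∩ Set.Ici a).Nonempty := by
      obtain ⟨y, hy, hay, hyb⟩ := (hclub b hb).2.2 a hab
      exact ⟨y, hy, hay⟩
    have hcmem : sInf (e b ∩ Set.Ici a) ∈ e b ∩ Set.Ici a := csInf_mem hne
    have hw1 : walk e a b 1 = sInf (e b ∩ Set.Ici a) := by
      simp only [walk, if_neg hab.ne']; exact if_neg hab.ne'
    have hcb : sInf (e b ∩ Set.Ici a) < b := (hclub b hb).1 hcmem.1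
    rcases eq_or_lt_of_le (Set.mem_Ici.mp hcmem.2 : a ≤ _) with hca | hac
    · exact ⟨1, by rw [hw1, ← hca]⟩
    · obtain ⟨n, hn⟩ := IH _ hcb (hcb.trans hb) a hac
      exact ⟨n + 1, by rw [walk_shift', hw1]; exact hn⟩

lemma rho2_shift' (e : Ordinal → Set Ordinal) (a b : Ordinal) (hba : b ≠ a)
    (h : ∃ n, walk e a b n = a) :
    rho2 e a b = rho2 e a (walk e a b 1) + 1 := by
  obtain ⟨N, hN⟩ := h
  have hN0 : N ≠ 0 := by rintro rfl; exact hba hN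
  obtain ⟨k, rfl⟩ := Nat.exists_eq_succ_of_ne_zero hN0
  have hT : walk e a (walk e a b 1) k = a := by rw [← walk_shift']; exact hN
  have hTmem : walk e a (walk e a b 1) (rho2 e a (walk e a b 1)) = a := by
    unfold rho2; exact Nat.sInf_mem (⟨k, hT⟩ : {n : ℕ | walk e a (walk e a b 1) n = a}.Nonempty)
  apply le_antisymm
  · unfold rho2
    exact Nat.sInf_le (by rw [Set.mem_setOf_eq, walk_shift']; exact hTmem)
  · have hSmem : walk e a b (rho2 e a b) = a := by
      unfold rho2; exact Nat.sInf_mem (⟨k + 1, hN⟩ : {n : ℕ | walk e a b n = a}.Nonempty)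
    have h0 : rho2 e a b ≠ 0 := by
      intro h0; rw [h0] at hSmem; exact hba hSmem
    obtain ⟨j, hj⟩ := Nat.exists_eq_succ_of_ne_zero h0
    rw [hj]
    have : walk e a (walk e a b 1) j = a := by
      rw [← walk_shift']
      show walk e a b j.succ = a
      rw [← hj]; exact hSmem
    exact Nat.succ_le_succ (Nat.sInf_le this)

lemma anti_eventually_const' (g : ℕ → Ordinal) (hg : ∀ m n, m ≤ n → g n ≤ g m) :
    ∃ m0, ∀ m, m0 ≤ m → g m = g m0 := by
  obtain ⟨x, ⟨m0, rfl⟩, hmin⟩ :=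
    (wellFounded_lt (α := Ordinal)).has_min (Set.range g) ⟨g 0, 0, rfl⟩
  exact ⟨m0, fun m hm => le_antisymm (hg _ _ hm) (not_lt.1 (hmin _ ⟨m, rfl⟩))⟩

end Aux

/-- For a generalized C-sequence, the `m`-walk from `b` to `a` stabilizes: there is `m*` such
that for every `m ≥ m*` the `m`-walk coincides with the `m*`-walk. -/
theorem stmt10 (lam : Cardinal) (e : Ordinal → ℕ → Set Ordinal)
    (hclub : ∀ ξ, ξ < lam.ord → ∀ m, IsClubIn (e ξ m) ξ)
    (hmono : ∀ ξ, ξ < lam.ord → ∀ m, e ξ m ⊆ e ξ (m + 1))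
    (a b : Ordinal) (hab : a < b) (hb : b < lam.ord) :
    ∃ mstar : ℕ, ∀ m, mstar ≤ m →
      rho2 (fun ξ => e ξ m) a b = rho2 (fun ξ => e ξ mstar) a b ∧
      ∀ i, i ≤ rho2 (fun ξ => e ξ mstar) a b →
        walk (fun ξ => e ξ m) a b i = walk (fun ξ => e ξ mstar) a b i := by

  induction b using Ordinal.induction with
  | h b IH =>
    -- subsets grow in m
    have hsub : ∀ ξ, ξ < lam.ord → ∀ m n, m ≤ n → e ξ m ⊆ e ξ n := by
      intro ξ hξ m n hmn
      induction n with
      | zero => rw [Nat.le_zero.mp hmn]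
      | succ n ih =>
        rcases Nat.lt_or_ge m (n + 1) with h | h
        · exact (ih (Nat.lt_succ_iff.mp h)).trans (hmono ξ hξ n)
        · rw [le_antisymm hmn h]
    have hne : ∀ m, (e b m ∩ Set.Ici a).Nonempty := by
      intro m
      obtain ⟨y, hy, hay, hyb⟩ := (hclub b hb m).2.2 a hab
      exact ⟨y, hy, hay⟩
    set g : ℕ → Ordinal := fun m => sInf (e b m ∩ Set.Ici a) with hg
    have hganti : ∀ m n, m ≤ n → g n ≤ g m :=
      fun m n hmn => csInf_le_csInf (OrderBot.bddBelow _) (hne m)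
        (Set.inter_subset_inter_left _ (hsub b hb m n hmn))
    obtain ⟨m0, hm0⟩ := anti_eventually_const' g hganti
    have hw1 : ∀ m, walk (fun ξ => e ξ m) a b 1 = g m := by
      intro m; simp only [walk, if_neg hab.ne', hg]; exact if_neg hab.ne'
    have hcmem : g m0 ∈ e b m0 ∩ Set.Ici a := csInf_mem (hne m0)
    have hcb : g m0 < b := (hclub b hb m0).1 hcmem.1
    have hterm : ∀ m, ∃ n, walk (fun ξ => e ξ m) a b n = a :=
      fun m => walk_term' lam.ord (fun ξ => e ξ m) (fun ξ hξ => hclub ξ hξ m) b hb a hab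
    rcases eq_or_lt_of_le (Set.mem_Ici.mp hcmem.2 : a ≤ g m0) with hca | hac
    · -- the walk reaches a in one step for all m ≥ m0
      refine ⟨m0, fun m hm => ?_⟩
      have hr : ∀ k, m0 ≤ k → rho2 (fun ξ => e ξ k) a b = 1 := by
        intro k hk
        rw [rho2_shift' _ _ _ hab.ne' (hterm k), hw1, hm0 k hk, ← hca]
        have h0 : rho2 (fun ξ => e ξ k) a a = 0 := by
          unfold rho2
          exact Nat.sInf_eq_zero.mpr (Or.inl rfl)
        rw [h0]
      rw [hr m hm, hr m0 le_rfl]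
      refine ⟨rfl, fun i hi => ?_⟩
      interval_cases i
      · rfl
      · rw [hw1, hw1, hm0 m hm]
    · -- recurse at c = g m0
      obtain ⟨m1, hm1⟩ := IH (g m0) hcb hac (hcb.trans hb)
      refine ⟨max m0 m1, fun m hm => ?_⟩
      have hmm0 : m0 ≤ m := le_trans (le_max_left _ _) hm
      have hmm1 : m1 ≤ m := le_trans (le_max_right _ _) hm
      have hsm0 : m0 ≤ max m0 m1 := le_max_left _ _
      have hsm1 : m1 ≤ max m0 m1 := le_max_right _ _
      have hc_m : walk (fun ξ => e ξ m) a b 1 = g m0 := by rw [hw1, hm0 m hmm0]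
      have hc_s : walk (fun ξ => e ξ (max m0 m1)) a b 1 = g m0 := by
        rw [hw1, hm0 _ hsm0]
      have hrm := rho2_shift' (fun ξ => e ξ m) a b hab.ne' (hterm m)
      have hrs := rho2_shift' (fun ξ => e ξ (max m0 m1)) a b hab.ne' (hterm _)
      rw [hc_m] at hrm
      rw [hc_s] at hrs
      have hr2 : rho2 (fun ξ => e ξ m) a (g m0) = rho2 (fun ξ => e ξ (max m0 m1)) a (g m0) := by
        rw [(hm1 m hmm1).1, (hm1 _ hsm1).1]
      constructor
      · rw [hrm, hrs, hr2]
      · intro i hi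
        rw [hrs] at hi
        match i, hi with
        | 0, _ => rfl
        | j + 1, hi =>
          have hj : j ≤ rho2 (fun ξ => e ξ m1) a (g m0) := by
            rw [(hm1 _ hsm1).1] at hi
            exact Nat.succ_le_succ_iff.mp hi
          rw [walk_shift' (fun ξ => e ξ m) a b j,
            walk_shift' (fun ξ => e ξ (max m0 m1)) a b j, hc_m, hc_s,
            (hm1 m hmm1).2 j hj, (hm1 _ hsm1).2 j hj]


end
end

section
/- Let μ be a singular cardinal and (⟨μ_i : i < cf(μ)⟩, ⟨f_α : α < μ⁺⟩) a scale for μ. Then there is a closed unbounded set C ⊆ μ⁺ such that for every β ∈ C there is i* < cf(μ) such that for all i with i* ≤ i < cf(μ), all η < μ_i, and all ν < μ_{i+1}, the set {α < β : f_α(i) > η and f_α(i+1) > ν} is unbounded in β. -/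
noncomputable section

open Set

/-- For any scale `(mus, f)` on a singular `μ` there is a club `C ⊆ μ⁺` such that for every
`β ∈ C` and all sufficiently large `i < cf μ`: for all `η < μ_i` and `ν < μ_{i+1}`, the set
`{α < β : f_α(i) > η ∧ f_α(i+1) > ν}` is unbounded in `β`. -/
theorem stmt11 (mu : Cardinal) (hsing : IsSingular mu)
    (mus : Ordinal → Cardinal) (f : Ordinal → Ordinal → Ordinal)
    (hscale : IsScale mu mus f) :
    ∃ C : Set Ordinal, IsClubIn C (sucOrd mu) ∧
      ∀ β ∈ C, ∃ istar, istar < cofOrd mu ∧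
        ∀ i, istar ≤ i → i < cofOrd mu →
          ∀ η, η < (mus i).ord → ∀ ν, ν < (mus (i + 1)).ord →
            ∀ x, x < β → ∃ α, x < α ∧ α < β ∧ η < f α i ∧ ν < f α (i + 1) := by
  classical
  obtain ⟨hmu0, hcoflt⟩ := hsing
  set lam := sucOrd mu with hlamdef
  have hmusucc : Cardinal.aleph0 ≤ Order.succ mu := hmu0.trans (Order.le_succ mu)
  have hreg : (Order.succ mu).IsRegular := Cardinal.isRegular_succ hmu0
  have hlamlim : Order.IsSuccLimit lam := Cardinal.isSuccLimit_ord hmusucc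
  have hlamcof : lam.cof = Order.succ mu := hreg.cof_eq
  have hlam_pos : (0 : Ordinal) < lam := hlamlim.pos
  have hmulim : Order.IsSuccLimit mu.ord := Cardinal.isSuccLimit_ord hmu0
  have hcof0 : Cardinal.aleph0 ≤ Ordinal.cof mu.ord := Ordinal.aleph0_le_cof.2 hmulim
  have hcoflim : Order.IsSuccLimit (cofOrd mu) := Cardinal.isSuccLimit_ord hcof0
  have hlt1 : ∀ a : Ordinal, a < a + 1 := fun a => by
    rw [Ordinal.add_one_eq_succ]; exact Order.lt_succ a
  have hsucclam : ∀ x, x < lam → x + 1 < lam := fun x hx => by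
    rw [Ordinal.add_one_eq_succ]; exact hlamlim.succ_lt hx
  have hsucc_mem : ∀ i, i < cofOrd mu → i + 1 < cofOrd mu := fun i hi => by
    rw [Ordinal.add_one_eq_succ]; exact hcoflim.succ_lt hi
  have hmusi_lim : ∀ i, i < cofOrd mu → Order.IsSuccLimit (mus i).ord := fun i hi =>
    Cardinal.isSuccLimit_ord (hscale.regular i hi).aleph0_le
  -- the key "goodness" property of an index i
  let Good : Ordinal → Prop := fun i =>
    ∀ η, η < (mus i).ord → ∀ ν, ν < (mus (i + 1)).ord → ∀ x, x < lam →
      ∃ α, x < α ∧ α < lam ∧ η < f α i ∧ ν < f α (i + 1)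
  have lemA : ∃ istar, istar < cofOrd mu ∧ ∀ i, istar ≤ i → i < cofOrd mu → Good i := by
    by_contra hcon
    have hcon' : ∀ istar, istar < cofOrd mu →
        ∃ i, istar ≤ i ∧ i < cofOrd mu ∧ ¬ Good i := by
      intro istar h
      by_contra h2
      push_neg at h2
      exact hcon ⟨istar, h, h2⟩
    -- bad data
    let P : Ordinal → Ordinal × Ordinal × Ordinal → Prop := fun i p =>
      p.1 < (mus i).ord ∧ p.2.1 < (mus (i + 1)).ord ∧ p.2.2 < lam ∧
        ∀ α, p.2.2 < α → α < lam → ¬(p.1 < f α i ∧ p.2.1 < f α (i + 1))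
    let Bad : Ordinal → Prop := fun i => ∃ p, P i p
    have hBadOfNotGood : ∀ i, ¬ Good i → Bad i := by
      intro i hng
      simp only [Good] at hng
      push_neg at hng
      obtain ⟨η, hη, ν, hν, x, hx, hα⟩ := hng
      refine ⟨(η, ν, x), hη, hν, hx, fun α h1 h2 hc => ?_⟩
      exact absurd (hα α h1 h2 hc.1) (not_le.2 hc.2)
    let D : Ordinal → Ordinal × Ordinal × Ordinal := fun i =>
      if h : Bad i then h.choose else (0, 0, 0)
    have hD : ∀ i, Bad i → P i (D i) := fun i h => by
      simp only [D, dif_pos h]; exact h.choose_spec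
    -- a function to be dominated
    let g : Ordinal → Ordinal := fun j =>
      max ((D j).1 + 1)
        (if h : ∃ i, Bad i ∧ j = i + 1 then (D h.choose).2.1 + 1 else 0)
    have hg : ∀ j, j < cofOrd mu → g j < (mus j).ord := by
      intro j hj
      have hlimj := hmusi_lim j hj
      apply max_lt
      · rcases em (Bad j) with h | h
        · have h1 := (hD j h).1
          rw [Ordinal.add_one_eq_succ]; exact hlimj.succ_lt h1
        · simp only [D, dif_neg h]
          rw [Ordinal.add_one_eq_succ]
          exact hlimj.succ_lt hlimj.pos
      · split_ifs with h
        · obtain ⟨hb, he⟩ := h.choose_spec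
          have h1 := (hD _ hb).2.1
          rw [← he] at h1
          rw [Ordinal.add_one_eq_succ]
          exact hlimj.succ_lt h1
        · exact hlimj.pos
    -- bound for the bad x's
    let XS : Ordinal := Ordinal.bsup (cofOrd mu) (fun i _ => (D i).2.2)
    have hXSlt : XS < lam := by
      apply Ordinal.bsup_lt_ord
      · rw [hlamcof]
        simp only [cofOrd, Cardinal.card_ord]
        exact hcoflt.trans (Order.lt_succ mu)
      · intro i hi
        rcases em (Bad i) with h | h
        · exact (hD i h).2.2.1
        · simp only [D, dif_neg h]; exact hlam_pos
    obtain ⟨α0, hα0, i0, hi0, hα0dom⟩ := hscale.f_cofinal g hg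
    set A := max (α0 + 1) (XS + 1) with hAdef
    have hAlt : A < lam := max_lt (hsucclam _ hα0) (hsucclam _ hXSlt)
    have hα0A : α0 < A := lt_of_lt_of_le (hlt1 α0) (le_max_left _ _)
    obtain ⟨i1, hi1, hmono⟩ := hscale.f_mono α0 A hα0A hAlt
    have histar : max i0 i1 < cofOrd mu := max_lt hi0 hi1
    obtain ⟨i, hge, hilt, hng⟩ := hcon' (max i0 i1) histar
    have hbad : Bad i := hBadOfNotGood i hng
    obtain ⟨hη, hν, hx, hP⟩ := hD i hbad
    have h1 : (D i).2.2 < A := by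
      have h2 : (D i).2.2 ≤ XS := Ordinal.le_bsup (fun i _ => (D i).2.2) i hilt
      exact lt_of_le_of_lt h2 (lt_of_lt_of_le (hlt1 XS) (le_max_right _ _))
    apply hP A h1 hAlt
    have hii1 : i + 1 < cofOrd mu := hsucc_mem i hilt
    have hgei : i0 ≤ i := le_trans (le_max_left i0 i1) hge
    have hgei' : i1 ≤ i := le_trans (le_max_right i0 i1) hge
    have hii : i ≤ i + 1 := le_of_lt (hlt1 i)
    constructor
    · have h2 : g i < f α0 i := hα0dom i hgei hilt
      have h3 : f α0 i < f A i := hmono i hgei' hilt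
      have h4 : (D i).1 + 1 ≤ g i := le_max_left _ _
      exact lt_of_lt_of_le (hlt1 _) (le_of_lt (lt_trans (lt_of_le_of_lt h4 h2) h3))
    · have h2 : g (i + 1) < f α0 (i + 1) := hα0dom (i + 1) (le_trans hgei hii) hii1
      have h3 : f α0 (i + 1) < f A (i + 1) := hmono (i + 1) (le_trans hgei' hii) hii1
      have hex : ∃ i', Bad i' ∧ i + 1 = i' + 1 := ⟨i, hbad, rfl⟩
      have hchoose : hex.choose = i := by
        have h5 := hex.choose_spec.2
        have h7 : Order.succ i = Order.succ hex.choose := by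
          rw [← Ordinal.add_one_eq_succ, ← Ordinal.add_one_eq_succ]; exact h5
        exact (Order.succ_eq_succ_iff.1 h7).symm
      have h4 : (D i).2.1 + 1 ≤ g (i + 1) := by
        have h6 : (if h : ∃ i', Bad i' ∧ i + 1 = i' + 1 then (D h.choose).2.1 + 1 else 0)
            = (D i).2.1 + 1 := by rw [dif_pos hex, hchoose]
        calc (D i).2.1 + 1 = _ := h6.symm
          _ ≤ g (i + 1) := le_max_right _ _
      exact lt_of_lt_of_le (hlt1 _) (le_of_lt (lt_trans (lt_of_le_of_lt h4 h2) h3))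
  obtain ⟨istar, histar, hGood⟩ := lemA
  -- witness function
  let Q : Ordinal → Ordinal → Ordinal → Ordinal → Ordinal → Prop := fun x i η ν α =>
    x < α ∧ α < lam ∧ η < f α i ∧ ν < f α (i + 1)
  let W : Ordinal → Ordinal → Ordinal → Ordinal → Ordinal := fun x i η ν =>
    if h : ∃ α, Q x i η ν α then h.choose else 0
  have hW : ∀ x i η ν, istar ≤ i → i < cofOrd mu → η < (mus i).ord →
      ν < (mus (i + 1)).ord → x < lam → Q x i η ν (W x i η ν) := by
    intro x i η ν h1 h2 h3 h4 h5
    have hex : ∃ α, Q x i η ν α := hGood i h1 h2 η h3 ν h4 x h5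
    simp only [W, dif_pos hex]
    exact hex.choose_spec
  have hWlt : ∀ x i η ν, W x i η ν < lam := by
    intro x i η ν
    simp only [W]
    split_ifs with h
    · exact h.choose_spec.2.1
    · exact hlam_pos
  -- closure function
  let F : Ordinal → Ordinal := fun γ =>
    Ordinal.bsup γ fun x _ => Ordinal.bsup (cofOrd mu) fun i _ =>
      Ordinal.bsup mu.ord fun η _ => Ordinal.bsup mu.ord fun ν _ => W x i η ν
  have hFlt : ∀ γ, γ < lam → F γ < lam := by
    intro γ hγ
    apply Ordinal.bsup_lt_ord
    · rw [hlamcof]; exact Cardinal.lt_ord.1 hγ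
    intro x hx
    apply Ordinal.bsup_lt_ord
    · rw [hlamcof]
      simp only [cofOrd, Cardinal.card_ord]
      exact hcoflt.trans (Order.lt_succ mu)
    intro i hi
    apply Ordinal.bsup_lt_ord
    · rw [hlamcof, Cardinal.card_ord]; exact Order.lt_succ mu
    intro η hη
    apply Ordinal.bsup_lt_ord
    · rw [hlamcof, Cardinal.card_ord]; exact Order.lt_succ mu
    intro ν hν
    exact hWlt x i η ν
  have hWF : ∀ γ x i η ν, x < γ → i < cofOrd mu → η < mu.ord → ν < mu.ord →
      W x i η ν ≤ F γ := by
    intro γ x i η ν h1 h2 h3 h4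
    calc W x i η ν ≤ Ordinal.bsup mu.ord fun ν _ => W x i η ν :=
          Ordinal.le_bsup _ ν h4
      _ ≤ Ordinal.bsup mu.ord fun η _ => Ordinal.bsup mu.ord fun ν _ => W x i η ν :=
          Ordinal.le_bsup _ η h3
      _ ≤ Ordinal.bsup (cofOrd mu) fun i _ => Ordinal.bsup mu.ord fun η _ =>
            Ordinal.bsup mu.ord fun ν _ => W x i η ν :=
          Ordinal.le_bsup _ i h2
      _ ≤ F γ := Ordinal.le_bsup _ x h1
  -- the club
  let C : Set Ordinal := {β | β < lam ∧ ∀ i, istar ≤ i → i < cofOrd mu →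
      ∀ η, η < (mus i).ord → ∀ ν, ν < (mus (i + 1)).ord →
        ∀ x, x < β → ∃ α, x < α ∧ α < β ∧ η < f α i ∧ ν < f α (i + 1)}
  refine ⟨C, ⟨fun β hβ => hβ.1, ?_, ?_⟩, ?_⟩
  · -- closed
    intro δ hδ hδ0 hacc
    refine ⟨hδ, ?_⟩
    intro i h1 h2 η h3 ν h4 x hx
    obtain ⟨y, hyC, hxy, hyδ⟩ := hacc x hx
    obtain ⟨α, h5, h6, h7, h8⟩ := hyC.2 i h1 h2 η h3 ν h4 x hxy
    exact ⟨α, h5, h6.trans hyδ, h7, h8⟩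
  · -- unbounded
    intro x hx
    let s : ℕ → Ordinal := fun n => Nat.rec (x + 1) (fun _ p => max (F p) p + 1) n
    have hs_succ : ∀ n, s (n + 1) = max (F (s n)) (s n) + 1 := fun n => rfl
    have hs_lt : ∀ n, s n < lam := by
      intro n
      induction n with
      | zero => exact hsucclam x hx
      | succ n ih =>
        rw [hs_succ]
        exact hsucclam _ (max_lt (hFlt _ ih) ih)
    have hβlt : (⨆ n, s n) < lam := by
      apply Ordinal.iSup_lt_ord_lift _ hs_lt
      rw [Cardinal.mk_nat, Cardinal.lift_aleph0, hlamcof]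
      exact lt_of_le_of_lt hmu0 (Order.lt_succ mu)
    set β := (⨆ n, s n) with hβdef
    have hsle : ∀ n, s n ≤ β := fun n => Ordinal.le_iSup s n
    have hβx : x < β := lt_of_lt_of_le (hlt1 x) (hsle 0)
    refine ⟨β, ⟨hβlt, ?_⟩, le_of_lt hβx, hβlt⟩
    intro i h1 h2 η h3 ν h4 z hz
    obtain ⟨n, hn⟩ := Ordinal.lt_iSup_iff.1 hz
    have hzlam : z < lam := hz.trans hβlt
    have hq := hW z i η ν h1 h2 h3 h4 hzlam
    refine ⟨W z i η ν, hq.1, ?_, hq.2.2.1, hq.2.2.2⟩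
    have hη' : η < mu.ord := lt_of_lt_of_le h3 (Cardinal.ord_le_ord.2 (hscale.le_mu i h2))
    have hν' : ν < mu.ord := lt_of_lt_of_le h4
      (Cardinal.ord_le_ord.2 (hscale.le_mu (i + 1) (hsucc_mem i h2)))
    have h5 : W z i η ν ≤ F (s n) := hWF (s n) z i η ν hn h2 hη' hν'
    calc W z i η ν ≤ F (s n) := h5
      _ ≤ max (F (s n)) (s n) := le_max_left _ _
      _ < s (n + 1) := by rw [hs_succ]; exact hlt1 _
      _ ≤ β := hsle (n + 1)
  · intro β hβ
    exact ⟨istar, histar, hβ.2⟩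

end
end

section
/- Let λ be a cardinal, ⟨e_ξ : ξ < λ⟩ a C-sequence on λ, and α < β < λ. Suppose α' is an ordinal with γ⁻(α, β) < α' ≤ α and α' ∈ e_{γ(α,β)}. Then: β_i(α', β) = β_i(α, β) for all i < ρ₂(α, β); ρ₂(α', β) = ρ₂(α, β); and γ(α', β) = γ(α, β). If in addition α' is a limit ordinal with cf(α') > |e_{γ(α,β)}|, then α' is not an accumulation point of e_{γ(α,β)} and η(α', β) < α'. -/
noncomputable section

open Set

section WalkAux
variable {e : Ordinal → Set Ordinal} {L a b : Ordinal}

lemma walk_bounds (hC : IsCSeq e L) (hab : a < b) (hb : b < L) :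
    ∀ n, a ≤ walk e a b n ∧ walk e a b n ≤ b := by
  intro n
  induction n with
  | zero => exact ⟨hab.le, le_rfl⟩
  | succ n ih =>
    by_cases h : walk e a b n = a
    · simp [walk, h, hab.le]
    · have hwa : a < walk e a b n := lt_of_le_of_ne ih.1 (Ne.symm h)
      obtain ⟨y, hy, hay, hyw⟩ := (hC _ (lt_of_le_of_lt ih.2 hb)).2.2 a hwa
      have hne : (e (walk e a b n) ∩ Set.Ici a).Nonempty := ⟨y, hy, hay⟩
      have hmem := csInf_mem hne
      have h1 : sInf (e (walk e a b n) ∩ Set.Ici a) ≤ y :=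
        csInf_le (OrderBot.bddBelow _) ⟨hy, hay⟩
      constructor
      · simpa [walk, h] using hmem.2
      · simp only [walk, h, if_false]
        exact h1.trans (hyw.le.trans ih.2)

lemma walk_lt (hC : IsCSeq e L) (hab : a < b) (hb : b < L) {n : ℕ}
    (h : walk e a b n ≠ a) : walk e a b (n + 1) < walk e a b n := by
  have ih := walk_bounds hC hab hb n
  have hwa : a < walk e a b n := lt_of_le_of_ne ih.1 (Ne.symm h)
  obtain ⟨y, hy, hay, hyw⟩ := (hC _ (lt_of_le_of_lt ih.2 hb)).2.2 a hwa
  have h1 : sInf (e (walk e a b n) ∩ Set.Ici a) ≤ y :=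
    csInf_le (OrderBot.bddBelow _) ⟨hy, hay⟩
  simp only [walk, h, if_false]
  exact h1.trans_lt hyw

lemma walk_reaches (hC : IsCSeq e L) (hab : a < b) (hb : b < L) :
    ∃ n, walk e a b n = a := by
  by_contra h
  push_neg at h
  have key : ∀ o : Ordinal, ∀ n, walk e a b n = o → False := by
    intro o
    induction o using Ordinal.induction with
    | h o IH =>
      intro n hn
      exact IH (walk e a b (n+1)) (hn ▸ walk_lt hC hab hb (h n)) (n+1) rfl
  exact key b 0 rfl

end WalkAux

/-- If `γ⁻(α,β) < α' ≤ α` and `α' ∈ e_{γ(α,β)}`, then the walk to `α'` agrees with the walk to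
`α` below `ρ₂(α,β)`, has the same length and the same last step `γ`.  If moreover `α'` is a limit
ordinal of cofinality greater than `|e_{γ(α,β)}|`, then `α'` is not an accumulation point of
`e_{γ(α,β)}` and `η(α',β) < α'`. -/
theorem stmt12 (lam : Cardinal) (e : Ordinal → Set Ordinal)
    (hC : IsCSeq e lam.ord) (a b : Ordinal) (hab : a < b) (hb : b < lam.ord)
    (a' : Ordinal) (h1 : gammaMinusW e a b < a') (h2 : a' ≤ a)
    (h3 : a' ∈ e (gammaW e a b)) :
    (∀ i, i < rho2 e a b → walk e a' b i = walk e a b i) ∧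
    rho2 e a' b = rho2 e a b ∧
    gammaW e a' b = gammaW e a b ∧
    (Order.IsSuccLimit a' →
      (Cardinal.mk ↥(e (gammaW e a b)) : Cardinal.{1}) < Cardinal.lift.{1, 0} (Ordinal.cof a') →
      ¬ IsAccOf (e (gammaW e a b)) a' ∧ etaW e a' b < a') := by
  have hρex : ∃ n, walk e a b n = a := walk_reaches hC hab hb
  set ρ := rho2 e a b with hρdef
  have hmemρ : walk e a b ρ = a := Nat.sInf_mem hρex
  have hne : ∀ i, i < ρ → walk e a b i ≠ a := by
    intro i hi hia
    exact absurd (Nat.sInf_le hia) (Nat.lt_irrefl _ ∘ fun h => lt_of_le_of_lt h hi)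
  have hgt : ∀ i, i < ρ → a < walk e a b i := fun i hi =>
    lt_of_le_of_ne (walk_bounds hC hab hb i).1 (Ne.symm (hne i hi))
  have hρpos : 0 < ρ := by
    rcases Nat.eq_zero_or_pos ρ with h | h
    · exact absurd (h ▸ hmemρ : walk e a b 0 = a) hab.ne'
    · exact h
  have hγeq : gammaW e a b = walk e a b (ρ - 1) := rfl
  -- bounded-above facts
  have hbddLow : ∀ c : Ordinal, BddAbove (e c ∩ Set.Iio a) :=
    fun c => ⟨a, fun x hx => hx.2.le⟩
  have hbddΓ : BddAbove (walkLow e a b '' {i : ℕ | i < ρ}) :=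
    ((Set.finite_Iio ρ).image _).bddAbove
  have hlowle : ∀ i, i + 1 < ρ → walkLow e a b (i+1) ≤ gammaMinusW e a b := by
    intro i hi
    exact le_csSup hbddΓ ⟨i+1, hi, rfl⟩
  -- key: walks agree
  have hW : ∀ i, i < ρ → walk e a' b i = walk e a b i := by
    intro i hi
    induction i with
    | zero => rfl
    | succ i ih =>
      have hi' : i < ρ := Nat.lt_of_succ_lt hi
      have hieq := ih hi'
      have hia' : walk e a' b i ≠ a' := by
        rw [hieq]
        exact (lt_of_le_of_lt h2 (hgt i hi')).ne'
      have hia : walk e a b i ≠ a := hne i hi'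
      have hset : e (walk e a b i) ∩ Set.Ici a' = e (walk e a b i) ∩ Set.Ici a := by
        apply Set.Subset.antisymm
        · rintro x ⟨hx, hx'⟩
          refine ⟨hx, ?_⟩
          by_contra hxa
          simp only [Set.mem_Ici, not_le] at hxa
          have hxle : x ≤ walkLow e a b (i+1) := le_csSup (hbddLow _) ⟨hx, hxa⟩
          exact absurd (Set.mem_Ici.mp hx')
            (not_le.mpr (lt_of_le_of_lt (hxle.trans (hlowle i hi)) h1))
        · rintro x ⟨hx, hx'⟩
          exact ⟨hx, le_trans h2 hx'⟩
      show (if walk e a' b i = a' then a' else sInf (e (walk e a' b i) ∩ Set.Ici a')) =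
          (if walk e a b i = a then a else sInf (e (walk e a b i) ∩ Set.Ici a))
      rw [if_neg hia', if_neg hia, hieq, hset]
  -- walk e a' b ρ = a'
  have hργ : ρ - 1 + 1 = ρ := Nat.succ_pred_eq_of_pos hρpos
  have hγa' : walk e a' b (ρ - 1) = walk e a b (ρ - 1) :=
    hW (ρ - 1) (Nat.sub_lt hρpos Nat.one_pos)
  have hγne : walk e a' b (ρ - 1) ≠ a' := by
    rw [hγa']
    exact (lt_of_le_of_lt h2 (hgt _ (Nat.sub_lt hρpos Nat.one_pos))).ne'
  have hWρ : walk e a' b ρ = a' := by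
    conv_lhs => rw [← hργ]
    show (if walk e a' b (ρ-1) = a' then a' else sInf (e (walk e a' b (ρ-1)) ∩ Set.Ici a')) = a'
    rw [if_neg hγne, hγa', ← hγeq]
    refine le_antisymm (csInf_le (OrderBot.bddBelow _) ⟨h3, Set.self_mem_Ici⟩) (le_csInf ⟨a', h3, Set.self_mem_Ici⟩ ?_)
    exact fun y hy => hy.2
  have hρ' : rho2 e a' b = ρ := by
    refine le_antisymm (Nat.sInf_le hWρ) ?_
    by_contra hlt
    push_neg at hlt
    have hmem0 : rho2 e a' b ∈ {n : ℕ | walk e a' b n = a'} := Nat.sInf_mem ⟨ρ, hWρ⟩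
    have hmem' : walk e a' b (rho2 e a' b) = a' := hmem0
    rw [hW _ hlt] at hmem'
    exact absurd hmem' (lt_of_le_of_lt h2 (hgt _ hlt)).ne'
  have hγ' : gammaW e a' b = gammaW e a b := by
    show walk e a' b (rho2 e a' b - 1) = walk e a b (ρ - 1)
    rw [hρ', hγa']
  refine ⟨hW, hρ', hγ', ?_⟩
  intro hLim hcf
  have hnacc : ¬ IsAccOf (e (gammaW e a b)) a' := by
    rintro ⟨hpos, hsup⟩
    set s := e (gammaW e a b) ∩ Set.Iio a' with hs
    have hss : (Cardinal.mk ↥s : Cardinal.{1}) < Cardinal.lift.{1,0} (Ordinal.cof a') :=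
      lt_of_le_of_lt (Cardinal.mk_le_mk_of_subset Set.inter_subset_left) hcf
    obtain ⟨κ, hκ⟩ := Cardinal.mem_range_lift_of_le hss.le
    have hκlt : κ < Ordinal.cof a' := by
      rw [← hκ, Cardinal.lift_lt] at hss
      exact hss
    obtain ⟨eqv⟩ : Nonempty (↥s ≃ ULift.{1} κ.out) := by
      rw [← Cardinal.eq, Cardinal.mk_uLift, Cardinal.mk_out]
      exact hκ.symm
    set f : κ.out → Ordinal := fun i => ((eqv.symm (ULift.up i)) : ↥s).val with hf
    have hflt : ∀ i, f i < a' := fun i => ((eqv.symm (ULift.up i)).2).2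
    have hcard : Cardinal.mk κ.out < Ordinal.cof a' := by rwa [Cardinal.mk_out]
    have hsuplt : iSup f < a' := Ordinal.iSup_lt_ord hcard hflt
    have hge : a' ≤ iSup f := by
      rw [← hsup]
      refine csSup_le' ?_
      rintro x hx
      have hxf : f (eqv ⟨x, hx⟩).down = x := by
        simp only [hf]
        rw [show (ULift.up (eqv ⟨x, hx⟩).down) = eqv ⟨x, hx⟩ from rfl,
          Equiv.symm_apply_apply]
      rw [← hxf]
      exact le_ciSup (Ordinal.bddAbove_range f) _
    exact absurd (hge.trans_lt hsuplt) (lt_irrefl a')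
  refine ⟨hnacc, ?_⟩
  have key : ∀ i, i ≤ ρ → walkLow e a' b i < a' := by
    intro i hi
    cases i with
    | zero => exact hLim.pos
    | succ j =>
      have hj : j < ρ := hi
      have hwj : walk e a' b j = walk e a b j := hW j hj
      show sSup (e (walk e a' b j) ∩ Set.Iio a') < a'
      rw [hwj]
      rcases lt_or_eq_of_le hi with hlt | heq
      · have hsub : e (walk e a b j) ∩ Set.Iio a' ⊆ e (walk e a b j) ∩ Set.Iio a :=
          Set.inter_subset_inter_right _ (fun x hx => lt_of_lt_of_le hx h2)
        calc sSup (e (walk e a b j) ∩ Set.Iio a')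
            ≤ sSup (e (walk e a b j) ∩ Set.Iio a) := csSup_le_csSup' (hbddLow _) hsub
          _ = walkLow e a b (j+1) := rfl
          _ ≤ gammaMinusW e a b := hlowle j hlt
          _ < a' := h1
      · have hjeq : walk e a b j = gammaW e a b := by
          rw [hγeq]
          congr 1
          omega
        rw [hjeq]
        have hle : sSup (e (gammaW e a b) ∩ Set.Iio a') ≤ a' :=
          csSup_le' (fun x hx => hx.2.le)
        refine lt_of_le_of_ne hle ?_
        intro hcon
        exact hnacc ⟨hLim.pos, hcon⟩
  show etaW e a' b < a'
  unfold etaW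
  rw [hρ']
  have hfin : (walkLow e a' b '' {i : ℕ | i ≤ ρ}).Finite := (Set.finite_Iic ρ).image _
  have hnem : (walkLow e a' b '' {i : ℕ | i ≤ ρ}).Nonempty :=
    ⟨walkLow e a' b 0, 0, Nat.zero_le ρ, rfl⟩
  obtain ⟨i, hi, hieq⟩ := hnem.csSup_mem hfin
  rw [← hieq]
  exact key i hi

end
end

section
/- Let μ be a singular cardinal, (⟨μ_i : i < cf(μ)⟩, ⟨f_α : α < μ⁺⟩) a scale for μ, and ⟨s_α : α < μ⁺⟩ a sequence of pairwise disjoint nonempty subsets of μ⁺, each of cardinality less than cf(μ). Then there exist an unbounded set J ⊆ μ⁺ and an index i₀ < cf(μ) such that: (a) for all α < β in J, sup(s_α) < min(s_β); (b) α ≤ min(s_α) for all α ∈ J; and (c) for all α ∈ J, all ε ∈ s_α, and all i with i₀ ≤ i < cf(μ), f_{min(s_α)}(i) ≤ f_ε(i). -/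
noncomputable section

open Set

set_option linter.deprecated false in
private lemma supLT {o : Ordinal} {S : Set Ordinal}
    (hS : S ⊆ Set.Iio o)
    (hc : (Cardinal.mk ↥S : Cardinal.{1}) < Cardinal.lift.{1, 0} o.cof) :
    sSup S < o := by
  rcases S.eq_empty_or_nonempty with rfl | hne
  · have ho : o ≠ 0 := by
      rintro rfl
      rw [Ordinal.cof_zero, Cardinal.lift_zero] at hc
      exact absurd hc (Cardinal.zero_le _).not_gt
    have h0 : (0:Ordinal) < o := pos_iff_ne_zero.2 ho
    simpa [csSup_empty, Ordinal.bot_eq_zero] using h0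
  · apply Ordinal.sSup_lt_of_lt_cof _ hS
    rw [← Ordinal.lift_cof]; exact hc


private lemma existsGood (mu : Cardinal.{0}) (hmu : Cardinal.aleph0 ≤ mu)
    (s : Ordinal → Set Ordinal)
    (hne : ∀ a, a < sucOrd mu → (s a).Nonempty)
    (hsub : ∀ a, a < sucOrd mu → s a ⊆ Set.Iio (sucOrd mu))
    (hdisj : ∀ a b, a < sucOrd mu → b < sucOrd mu → a ≠ b → Disjoint (s a) (s b))
    (x : Ordinal) (hx : x < sucOrd mu) :
    ∃ α, x ≤ α ∧ α < sucOrd mu ∧ α ≤ sInf (s α) := by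
  classical
  set lam := sucOrd mu with hlam
  by_contra hcon
  push_neg at hcon
  set m : Ordinal → Ordinal := fun α => sInf (s α) with hm
  have hmem : ∀ α, α < lam → m α ∈ s α := fun α h => csInf_mem (hne α h)
  have hlt : ∀ α, α < lam → m α < lam := fun α h => hsub α h (hmem α h)
  have hinj : ∀ α β, α < lam → β < lam → m α = m β → α = β := by
    intro α β hα hβ h
    by_contra hne'
    exact Set.disjoint_left.mp (hdisj α β hα hβ hne') (hmem α hα) (h ▸ hmem β hβ)
  have hiter_lt : ∀ n α, α < lam → m^[n] α < lam := by
    intro n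
    induction n with
    | zero => intro α h; simpa using h
    | succ n ih => intro α h; rw [Function.iterate_succ_apply]; exact ih _ (hlt α h)
  have hinj_iter : ∀ n α β, α < lam → β < lam → m^[n] α = m^[n] β → α = β := by
    intro n
    induction n with
    | zero => intro α β _ _ h; simpa using h
    | succ n ih =>
      intro α β hα hβ h
      rw [Function.iterate_succ_apply', Function.iterate_succ_apply'] at h
      exact ih α β hα hβ (hinj _ _ (hiter_lt n α hα) (hiter_lt n β hβ) h)
  have key : ∀ α, x ≤ α → α < lam → ∃ n, m^[n] α < x := by
    intro α hxα hα
    by_contra hk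
    push_neg at hk
    have hdec : ∀ n, m^[n+1] α < m^[n] α := by
      intro n
      rw [Function.iterate_succ_apply']
      exact hcon _ (hk n) (hiter_lt n α hα)
    obtain ⟨a, han, hmin⟩ := Ordinal.lt_wf.has_min (Set.range fun n => m^[n] α)
      ⟨_, Set.mem_range_self 0⟩
    obtain ⟨n, rfl⟩ := han
    exact hmin _ (Set.mem_range_self (n+1)) (hdec n)
  have hk : ∀ a : ↥(Set.Ico x lam), ∃ n, m^[n] (a : Ordinal) < x :=
    fun a => key a a.2.1 a.2.2
  choose k hkspec using hk
  set Φ : ↥(Set.Ico x lam) → ↥(Set.Iio x) × ULift.{1} ℕ :=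
    fun a => (⟨m^[k a] (a : Ordinal), hkspec a⟩, ⟨k a⟩) with hPhi
  have hPhiInj : Function.Injective Φ := by
    intro a b hab
    have h1 : k a = k b := congrArg (fun p => p.2.down) hab
    have h2 : m^[k a] (a : Ordinal) = m^[k b] (b : Ordinal) :=
      congrArg (fun p => (p.1 : Ordinal)) hab
    rw [← h1] at h2
    exact Subtype.ext (hinj_iter (k a) _ _ a.2.2 b.2.2 h2)
  have hcard1 : Cardinal.mk ↥(Set.Ico x lam) ≤ Cardinal.mk (↥(Set.Iio x) × ULift.{1} ℕ) :=
    Cardinal.mk_le_of_injective hPhiInj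
  have hprod : Cardinal.mk (↥(Set.Iio x) × ULift.{1} ℕ) =
      Cardinal.mk ↥(Set.Iio x) * Cardinal.aleph0 := by
    simp [Cardinal.mk_prod, Cardinal.lift_id, Cardinal.mk_uLift]
  have hx' : x.card ≤ mu := Order.lt_succ_iff.1 (Cardinal.lt_ord.1 hx)
  have hIio : Cardinal.mk ↥(Set.Iio x) ≤ Cardinal.lift.{1} mu := by
    rw [Ordinal.mk_Iio_ordinal]; exact Cardinal.lift_le.2 hx'
  have hIco : Cardinal.mk ↥(Set.Ico x lam) ≤ Cardinal.lift.{1} mu := by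
    refine hcard1.trans ?_
    rw [hprod]
    calc Cardinal.mk ↥(Set.Iio x) * Cardinal.aleph0
        ≤ Cardinal.lift.{1} mu * Cardinal.aleph0 := mul_le_mul_left hIio _
      _ = Cardinal.lift.{1} mu := by
          rw [Cardinal.mul_eq_max (Cardinal.aleph0_le_lift.2 hmu) le_rfl]
          exact max_eq_left (Cardinal.aleph0_le_lift.2 hmu)
  have hsplit : Set.Iio lam ⊆ Set.Iio x ∪ Set.Ico x lam := by
    intro y hy
    rcases lt_or_ge y x with h | h
    · exact Or.inl h
    · exact Or.inr ⟨h, hy⟩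
  have hcard2 : Cardinal.lift.{1, 0} (Order.succ mu) ≤
      Cardinal.mk ↥(Set.Iio x) + Cardinal.mk ↥(Set.Ico x lam) := by
    calc Cardinal.lift.{1, 0} (Order.succ mu) = Cardinal.lift.{1} lam.card := by
          rw [hlam]; rw [sucOrd, Cardinal.card_ord]
      _ = Cardinal.mk ↥(Set.Iio lam) := (Ordinal.mk_Iio_ordinal lam).symm
      _ ≤ Cardinal.mk ↥(Set.Iio x ∪ Set.Ico x lam) := Cardinal.mk_le_mk_of_subset hsplit
      _ ≤ _ := Cardinal.mk_union_le _ _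
  have hfin : Cardinal.lift.{1} (Order.succ mu) ≤ Cardinal.lift.{1} mu := by
    refine hcard2.trans ?_
    calc Cardinal.mk ↥(Set.Iio x) + Cardinal.mk ↥(Set.Ico x lam)
        ≤ Cardinal.lift.{1} mu + Cardinal.lift.{1} mu := add_le_add hIio hIco
      _ = Cardinal.lift.{1} mu := Cardinal.add_eq_self (Cardinal.aleph0_le_lift.2 hmu)
  exact absurd (Cardinal.lift_le.1 hfin) (Order.lt_succ mu).not_ge


/-- Given a scale and a pairwise disjoint family `⟨s_α : α < μ⁺⟩` of nonempty sets of size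
`< cf μ`, there is an unbounded `J ⊆ μ⁺` and `i₀ < cf μ` such that on `J` the family is
separated (`sup s_α < min s_β` for `α < β`), `α ≤ min s_α`, and `f_{min s_α}(i) ≤ f_ε(i)` for
all `ε ∈ s_α` and all `i ∈ [i₀, cf μ)`. -/
theorem stmt13 (mu : Cardinal) (hsing : IsSingular mu)
    (mus : Ordinal → Cardinal) (f : Ordinal → Ordinal → Ordinal)
    (hscale : IsScale mu mus f)
    (s : Ordinal → Set Ordinal)
    (hne : ∀ a, a < sucOrd mu → (s a).Nonempty)
    (hsub : ∀ a, a < sucOrd mu → s a ⊆ Set.Iio (sucOrd mu))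
    (hdisj : ∀ a b, a < sucOrd mu → b < sucOrd mu → a ≠ b → Disjoint (s a) (s b))
    (hcard : ∀ a, a < sucOrd mu → CardLT (s a) (Ordinal.cof mu.ord)) :
    ∃ J : Set Ordinal, J ⊆ Set.Iio (sucOrd mu) ∧ UnbddIn J (sucOrd mu) ∧
      ∃ i₀, i₀ < cofOrd mu ∧
        (∀ a ∈ J, ∀ b ∈ J, a < b → sSup (s a) < sInf (s b)) ∧
        (∀ a ∈ J, a ≤ sInf (s a)) ∧
        (∀ a ∈ J, ∀ ε ∈ s a, ∀ i, i₀ ≤ i → i < cofOrd mu →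
          f (sInf (s a)) i ≤ f ε i) := by
  classical
  obtain ⟨hmu, hcof_lt⟩ := hsing
  set lam := sucOrd mu with hlamdef
  have hreg : (Order.succ mu).IsRegular := Cardinal.isRegular_succ hmu
  have hlamcof : lam.cof = Order.succ mu := hreg.cof_eq
  have hlamlim : Order.IsSuccLimit lam := Cardinal.isSuccLimit_ord (hmu.trans (Order.le_succ mu))
  have hcmucof : (cofOrd mu).cof = Ordinal.cof mu.ord := Ordinal.cof_cof mu.ord
  have hmuordlim : Order.IsSuccLimit mu.ord := Cardinal.isSuccLimit_ord hmu
  have hcof0 : Cardinal.aleph0 ≤ Ordinal.cof mu.ord := Ordinal.aleph0_le_cof.2 hmuordlim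
  have hcmupos : (0 : Ordinal) < cofOrd mu :=
    Cardinal.lt_ord.2 (by simpa using Cardinal.aleph0_pos.trans_le hcof0)
  have hcofsucc : Cardinal.lift.{1,0} (Ordinal.cof mu.ord) <
      Cardinal.lift.{1,0} (Order.succ mu) :=
    Cardinal.lift_lt.2 (hcof_lt.trans (Order.lt_succ mu))
  have hsupS : ∀ a, a < lam → sSup (s a) < lam := by
    intro a ha
    apply supLT (hsub a ha)
    rw [hlamcof]
    have hc : (Cardinal.mk ↥(s a) : Cardinal.{1}) <
        Cardinal.lift.{1,0} (Ordinal.cof mu.ord) := hcard a ha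
    exact hc.trans hcofsucc
  -- for each a, an index i0 beyond which f (min s a) is dominated by every f ε, ε ∈ s a
  have hfm : ∀ a, a < lam → ∃ i0, i0 < cofOrd mu ∧
      ∀ ε ∈ s a, ∀ i, i0 ≤ i → i < cofOrd mu → f (sInf (s a)) i ≤ f ε i := by
    intro a ha
    set g : Ordinal → Ordinal := fun ε =>
      if h : ε < lam ∧ sInf (s a) < ε then (hscale.f_mono _ ε h.2 h.1).choose else 0
      with hgdef
    have hglt : ∀ ε, g ε < cofOrd mu := by
      intro ε
      rw [hgdef]
      dsimp only
      split
      · next h => exact (hscale.f_mono _ ε h.2 h.1).choose_spec.1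
      · exact hcmupos
    have hbddg : BddAbove (g '' s a) := by
      refine ⟨cofOrd mu, ?_⟩
      rintro _ ⟨ε, _, rfl⟩
      exact (hglt ε).le
    refine ⟨sSup (g '' s a), ?_, ?_⟩
    · apply supLT
      · rintro _ ⟨ε, _, rfl⟩
        exact hglt ε
      · rw [hcmucof]
        have hc : (Cardinal.mk ↥(s a) : Cardinal.{1}) <
            Cardinal.lift.{1,0} (Ordinal.cof mu.ord) := hcard a ha
        exact lt_of_le_of_lt Cardinal.mk_image_le hc
    · intro ε hε i hi hilt
      have hεlam : ε < lam := hsub a ha hε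
      have hinf_le : sInf (s a) ≤ ε := csInf_le' hε
      rcases eq_or_lt_of_le hinf_le with heq | hlt'
      · rw [heq]
      · have hgε : g ε = (hscale.f_mono _ ε hlt' hεlam).choose := by
          rw [hgdef]; dsimp only; rw [dif_pos ⟨hεlam, hlt'⟩]
        have hle : g ε ≤ sSup (g '' s a) := le_csSup hbddg (Set.mem_image_of_mem g hε)
        have h2 : (hscale.f_mono _ ε hlt' hεlam).choose ≤ i := by
          rw [← hgε]; exact hle.trans hi
        exact ((hscale.f_mono _ ε hlt' hεlam).choose_spec.2 i h2 hilt).le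
  choose! Ifun hIlt hIprop using hfm
  set SS : Ordinal → Set Ordinal :=
    fun i => {α | α < lam ∧ α ≤ sInf (s α) ∧ Ifun α ≤ i} with hSSdef
  have hSome : ∃ i, i < cofOrd mu ∧ UnbddIn (SS i) lam := by
    by_contra hno
    push_neg at hno
    have hbnd : ∀ i, i < cofOrd mu → ∃ x, x < lam ∧ ∀ y ∈ SS i, y < x := by
      intro i hi
      have hn := hno i hi
      rw [UnbddIn] at hn
      push_neg at hn
      obtain ⟨x, hx, h⟩ := hn
      exact ⟨x, hx, fun y hy => lt_of_not_ge fun hxy => (h y hy hxy).not_gt hy.1⟩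
    choose! bfun hbfun using hbnd
    set T := bfun '' Set.Iio (cofOrd mu) with hTdef
    have hTsub : T ⊆ Set.Iio lam := by
      rintro _ ⟨i, hi, rfl⟩
      exact (hbfun i hi).1
    have hTsup : sSup T < lam := by
      apply supLT hTsub
      rw [hlamcof]
      calc (Cardinal.mk ↥T : Cardinal.{1}) ≤ Cardinal.mk ↥(Set.Iio (cofOrd mu)) :=
            Cardinal.mk_image_le
        _ = Cardinal.lift.{1} (cofOrd mu).card := Ordinal.mk_Iio_ordinal _
        _ < Cardinal.lift.{1} (Order.succ mu) := by
            rw [cofOrd, Cardinal.card_ord]; exact hcofsucc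
    obtain ⟨α, hxα, hα, hαinf⟩ := existsGood mu hmu s hne hsub hdisj (sSup T) hTsup
    have hIα := hIlt α hα
    have hmem : α ∈ SS (Ifun α) := ⟨hα, hαinf, le_rfl⟩
    have h1 : α < bfun (Ifun α) := (hbfun _ hIα).2 α hmem
    have h2 : bfun (Ifun α) ≤ sSup T :=
      le_csSup ⟨lam, fun y hy => (hTsub hy).le⟩ (Set.mem_image_of_mem _ hIα)
    exact absurd (h2.trans hxα) h1.not_ge
  obtain ⟨i₀, hi₀, hSu⟩ := hSome
  set gg : Ordinal → Ordinal := fun x => sInf {α | α ∈ SS i₀ ∧ x ≤ α} with hggdef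
  have hggmem : ∀ x, x < lam → gg x ∈ SS i₀ ∧ x ≤ gg x := by
    intro x hx
    obtain ⟨y, hy, hxy, _⟩ := hSu x hx
    have hmem : gg x ∈ {α | α ∈ SS i₀ ∧ x ≤ α} :=
      csInf_mem (⟨y, ⟨hy, hxy⟩⟩ : Set.Nonempty {α | α ∈ SS i₀ ∧ x ≤ α})
    exact hmem
  have hggmono : ∀ x y, x ≤ y → y < lam → gg x ≤ gg y := by
    intro x y hxy hy
    obtain ⟨z, hz, hyz, _⟩ := hSu y hy
    exact csInf_le_csInf (OrderBot.bddBelow _) ⟨z, hz, hyz⟩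
      fun a ha => ⟨ha.1, hxy.trans ha.2⟩
  set F : Ordinal → Ordinal := fun x =>
    if h : x < lam then max (gg x) (sSup (s (gg x))) + 1 else 0 with hFdef
  have hFlt : ∀ x, x < lam → F x < lam := by
    intro x hx
    rw [hFdef]
    dsimp only
    rw [dif_pos hx]
    have h1 : gg x < lam := (hggmem x hx).1.1
    have h2 : sSup (s (gg x)) < lam := hsupS _ h1
    rw [Ordinal.add_one_eq_succ]
    exact hlamlim.succ_lt (max_lt h1 h2)
  have hD : ∀ x0, x0 < lam → ∃ δ, δ < lam ∧ x0 < δ ∧ ∀ y, y < δ → F y < δ := by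
    intro x0 hx0
    set c : ℕ → Ordinal := fun n =>
      Nat.rec (x0 + 1) (fun _ cn => sSup (F '' Set.Iio cn) + 1) n with hcdef
    have hc0 : c 0 = x0 + 1 := rfl
    have hcs : ∀ n, c (n + 1) = sSup (F '' Set.Iio (c n)) + 1 := fun n => rfl
    have hclam : ∀ n, c n < lam := by
      intro n
      induction n with
      | zero =>
        rw [hc0, Ordinal.add_one_eq_succ]
        exact hlamlim.succ_lt hx0
      | succ n ih =>
        rw [hcs n, Ordinal.add_one_eq_succ]
        apply hlamlim.succ_lt
        apply supLT
        · rintro _ ⟨y, hy, rfl⟩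
          exact hFlt y ((Set.mem_Iio.1 hy).trans ih)
        · rw [hlamcof]
          calc (Cardinal.mk ↥(F '' Set.Iio (c n)) : Cardinal.{1})
              ≤ Cardinal.mk ↥(Set.Iio (c n)) := Cardinal.mk_image_le
            _ = Cardinal.lift.{1} (c n).card := Ordinal.mk_Iio_ordinal _
            _ < Cardinal.lift.{1} (Order.succ mu) :=
                Cardinal.lift_lt.2 (Cardinal.lt_ord.1 ih)
    have hbddc : BddAbove (Set.range c) := ⟨lam, by rintro _ ⟨n, rfl⟩; exact (hclam n).le⟩
    refine ⟨sSup (Set.range c), ?_, ?_, ?_⟩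
    · apply supLT
      · rintro _ ⟨n, rfl⟩
        exact hclam n
      · rw [hlamcof]
        have hcount : (Cardinal.mk ↥(Set.range c) : Cardinal.{1}) ≤ Cardinal.aleph0 := by
          have : (Set.range c).Countable := Set.countable_range c
          have := this.to_subtype
          exact Cardinal.mk_le_aleph0
        refine hcount.trans_lt ?_
        exact Cardinal.aleph0_lt_lift.2 (hmu.trans_lt (Order.lt_succ mu))
    · have h1 : x0 < c 0 := by rw [hc0, Ordinal.add_one_eq_succ]; exact Order.lt_succ x0
      exact h1.trans_le (le_csSup hbddc ⟨0, rfl⟩)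
    · intro y hy
      have hex : ∃ n, y < c n := by
        by_contra h
        push_neg at h
        have : sSup (Set.range c) ≤ y :=
          csSup_le ⟨c 0, ⟨0, rfl⟩⟩ (by rintro _ ⟨n, rfl⟩; exact h n)
        exact absurd hy this.not_gt
      obtain ⟨n, hn⟩ := hex
      have hbddim : BddAbove (F '' Set.Iio (c n)) := by
        refine ⟨lam, ?_⟩
        rintro _ ⟨z, hz, rfl⟩
        exact (hFlt z ((Set.mem_Iio.1 hz).trans (hclam n))).le
      have h1 : F y ≤ sSup (F '' Set.Iio (c n)) :=
        le_csSup hbddim (Set.mem_image_of_mem F hn)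
      have h2 : sSup (F '' Set.Iio (c n)) < c (n + 1) := by
        rw [hcs n, Ordinal.add_one_eq_succ]
        exact Order.lt_succ _
      exact h1.trans_lt (h2.trans_le (le_csSup hbddc ⟨n + 1, rfl⟩))
  refine ⟨gg '' {δ | δ < lam ∧ ∀ y, y < δ → F y < δ}, ?_, ?_, i₀, hi₀, ?_, ?_, ?_⟩
  · rintro _ ⟨δ, hδ, rfl⟩
    exact (hggmem δ hδ.1).1.1
  · intro x hx
    obtain ⟨δ, hδ, hxδ, hδcl⟩ := hD x hx
    exact ⟨gg δ, ⟨δ, ⟨hδ, hδcl⟩, rfl⟩, hxδ.le.trans (hggmem δ hδ).2, (hggmem δ hδ).1.1⟩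
  · rintro _ ⟨δ, hδ, rfl⟩ _ ⟨δ', hδ', rfl⟩ hab
    have hδδ' : δ < δ' := by
      by_contra h
      push_neg at h
      exact absurd (hggmono δ' δ h hδ.1) hab.not_ge
    have hFδ : F δ < δ' := hδ'.2 δ hδδ'
    have hFeq : F δ = max (gg δ) (sSup (s (gg δ))) + 1 := by
      rw [hFdef]; dsimp only; rw [dif_pos hδ.1]
    have h1 : sSup (s (gg δ)) < F δ := by
      rw [hFeq, Ordinal.add_one_eq_succ]
      exact (le_max_right _ _).trans_lt (Order.lt_succ _)
    have h2 : (δ' : Ordinal) ≤ gg δ' := (hggmem δ' hδ'.1).2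
    have h3 : gg δ' ≤ sInf (s (gg δ')) := (hggmem δ' hδ'.1).1.2.1
    exact h1.trans (hFδ.trans_le (h2.trans h3))
  · rintro _ ⟨δ, hδ, rfl⟩
    exact (hggmem δ hδ.1).1.2.1
  · rintro _ ⟨δ, hδ, rfl⟩ ε hε i hi hilt
    have hm := (hggmem δ hδ.1).1
    exact hIprop _ hm.1 ε hε i (hm.2.2.trans hi) hilt

end
end
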